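/- Vanilla conformal prediction coverage guarantee: let R^(0), R^(1), ..., R^(K) be i.i.d. real-valued random variables, let δ ∈ (0,1), and let C := Quantile_{(1+1/K)(1−δ)}(R^(1),...,R^(K)). Then Prob(R^(0) ≤ C) ≥ 1 − δ, where the probability is over the joint law of R^(0),...,R^(K). -/

import Mathlib

open MeasureTheory ProbabilityTheory
open scoped ENNReal

/-- Empirical quantile of the scores `r^(1),...,r^(K)` at level `β`:
`Quantile_β(r) := inf {z | β ≤ #{i : r i ≤ z} / K}` (computed in the extended
reals, so that the quantile is `+∞` exactly when the defining set is empty). -/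
noncomputable def quantile {K : ℕ} (β : ℝ) (r : Fin K → EReal) : EReal :=
  sInf {z : EReal | β ≤ (Nat.card {i : Fin K // r i ≤ z} : ℝ) / K}

/-- The f-divergence `D_f(P,Q) := ∫ f (dP/dQ) dQ`. -/
noncomputable def fDiv {α : Type*} [MeasurableSpace α] (f : ℝ → ℝ)
    (P Q : Measure α) : ℝ :=
  ∫ a, f ((P.rnDeriv Q a).toReal) ∂Q

/-- The function `g(β) := inf {z ∈ [0,1] | β f(z/β) + (1-β) f((1-z)/(1-β)) ≤ ε}`
from robust conformal prediction. -/
noncomputable def gfun (f : ℝ → ℝ) (ε β : ℝ) : ℝ :=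
  sInf {z : ℝ | z ∈ Set.Icc 0 1 ∧ β * f (z / β) + (1 - β) * f ((1 - z) / (1 - β)) ≤ ε}

/-- The generalized inverse `g⁻¹(τ) := sup {β ∈ [0,1] | g(β) ≤ τ}`. -/
noncomputable def gInv (f : ℝ → ℝ) (ε τ : ℝ) : ℝ :=
  sSup {β : ℝ | β ∈ Set.Icc 0 1 ∧ gfun f ε β ≤ τ}

/-- `δ_n := 1 - g((1 + 1/K) g⁻¹(1 - δ))`. -/
noncomputable def deltaN (f : ℝ → ℝ) (ε δ : ℝ) (K : ℕ) : ℝ :=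
  1 - gfun f ε ((1 + 1 / K) * gInv f ε (1 - δ))

/-- `δ̃ := 1 - g⁻¹(1 - δ_n)`. -/
noncomputable def deltaTilde (f : ℝ → ℝ) (ε δ : ℝ) (K : ℕ) : ℝ :=
  1 - gInv f ε (1 - deltaN f ε δ K)

/-- Combinatorial rank lemma: for any `x : Fin n → ℝ` and `m ≤ n`, at least `m`
indices `j` satisfy `#{i : x i < x j} < m`. -/
lemma rank_count_lemma {n m : ℕ} (hmn : m ≤ n) (x : Fin n → ℝ) :
    m ≤ (Finset.univ.filter fun j =>
      (Finset.univ.filter fun i => x i < x j).card < m).card := by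
  classical
  by_contra h
  push_neg at h
  set B := Finset.univ.filter fun j : Fin n =>
      (Finset.univ.filter fun i => x i < x j).card < m with hB
  have hcompl : (Finset.univ \ B).Nonempty := by
    rw [Finset.sdiff_nonempty]
    intro hsub
    have := Finset.card_le_card hsub
    simp only [Finset.card_univ, Fintype.card_fin] at this
    omega
  obtain ⟨j0, hj0mem, hj0min⟩ := Finset.exists_min_image _ x hcompl
  have hj0 : m ≤ (Finset.univ.filter fun i => x i < x j0).card := by
    have h2 := (Finset.mem_sdiff.mp hj0mem).2
    rw [hB] at h2
    simp only [Finset.mem_filter, Finset.mem_univ, true_and, not_lt] at h2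
    exact h2
  have hsub : (Finset.univ.filter fun i => x i < x j0) ⊆ B := by
    intro i hi
    simp only [Finset.mem_filter, Finset.mem_univ, true_and] at hi
    by_contra hiB
    have hmem : i ∈ Finset.univ \ B := Finset.mem_sdiff.mpr ⟨Finset.mem_univ _, hiB⟩
    exact absurd hi (not_lt.mpr (hj0min i hmem))
  have := Finset.card_le_card hsub
  omega

/-- If fewer than `⌈(1-δ)(K+1)⌉` of the calibration scores are strictly below the
test score, then the test score is below the conformal quantile. -/
lemma le_quantile_of_count_lt {K : ℕ} (hK : 0 < K) {δ : ℝ}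
    (x : Fin (K+1) → ℝ)
    (h : (Finset.univ.filter fun i : Fin (K+1) => x i < x 0).card < ⌈(1 - δ) * ((K:ℝ) + 1)⌉₊) :
    (x 0 : EReal) ≤ quantile ((1 + 1 / K) * (1 - δ)) fun i : Fin K => (x i.succ : EReal) := by
  classical
  refine le_sInf fun z hz => ?_
  simp only [Set.mem_setOf_eq] at hz
  set c := Nat.card {i : Fin K // ((x i.succ : ℝ) : EReal) ≤ z} with hc
  have hK' : (0:ℝ) < K := by exact_mod_cast hK
  have hcK : (1 - δ) * ((K:ℝ) + 1) ≤ c := by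
    have h2 : (1 + 1/(K:ℝ)) * (1 - δ) * K ≤ c := (le_div_iff₀ hK').mp hz
    calc (1-δ)*((K:ℝ)+1) = (1 + 1/(K:ℝ))*(1-δ)*K := by field_simp
    _ ≤ c := h2
  have hm : ⌈(1 - δ) * ((K:ℝ) + 1)⌉₊ ≤ c := Nat.ceil_le.mpr hcK
  have hcfin : c = (Finset.univ.filter fun i : Fin K => ((x i.succ : ℝ) : EReal) ≤ z).card := by
    rw [hc, Nat.card_eq_fintype_card, Fintype.card_subtype]
  have hmono : (Finset.univ.filter fun i : Fin K => x i.succ < x 0).card ≤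
      (Finset.univ.filter fun i : Fin (K+1) => x i < x 0).card := by
    refine Finset.card_le_card_of_injOn (fun i => i.succ) ?_ ?_
    · intro i hi
      simp only [Finset.mem_coe, Finset.mem_filter, Finset.mem_univ, true_and] at hi ⊢
      exact hi
    · exact fun a _ b _ hab => Fin.succ_injective _ hab
  have hex : ∃ i : Fin K, ((x i.succ : ℝ) : EReal) ≤ z ∧ x 0 ≤ x i.succ := by
    by_contra hne
    push_neg at hne
    have hsub : (Finset.univ.filter fun i : Fin K => ((x i.succ : ℝ) : EReal) ≤ z) ⊆
        (Finset.univ.filter fun i : Fin K => x i.succ < x 0) := by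
      intro i hi
      simp only [Finset.mem_filter, Finset.mem_univ, true_and] at hi ⊢
      exact hne i hi
    have := Finset.card_le_card hsub
    omega
  obtain ⟨i, hiz, hi0⟩ := hex
  exact le_trans (by exact_mod_cast hi0) hiz

/-- **Vanilla conformal prediction coverage guarantee**: let `R^(0),...,R^(K)` be
i.i.d. real-valued random variables, `δ ∈ (0,1)`, and
`C := Quantile_{(1+1/K)(1-δ)}(R^(1),...,R^(K))`.  Then `Prob(R^(0) ≤ C) ≥ 1 - δ`. -/
theorem vanilla_conformal_prediction
    {Ω : Type*} [MeasurableSpace Ω] (μ : Measure Ω) [IsProbabilityMeasure μ]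
    {K : ℕ} (hK : 0 < K)
    (R : Fin (K + 1) → Ω → ℝ) (hmeas : ∀ i, Measurable (R i))
    (hindep : iIndepFun R μ)
    (ν : Measure ℝ) [IsProbabilityMeasure ν]
    (hiid : ∀ i : Fin (K + 1), Measure.map (R i) μ = ν)
    (δ : ℝ) (hδ : δ ∈ Set.Ioo (0 : ℝ) 1) :
    ENNReal.ofReal (1 - δ) ≤
      μ {ω | (R 0 ω : EReal) ≤
        quantile ((1 + 1 / K) * (1 - δ)) fun i : Fin K => ((R i.succ ω : ℝ) : EReal)} := by
  classical
  obtain ⟨hδ0, hδ1⟩ := hδ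
  set m := ⌈(1 - δ) * ((K:ℝ) + 1)⌉₊ with hmdef
  set T : Ω → (Fin (K+1) → ℝ) := fun ω i => R i ω with hT
  have hTmeas : Measurable T := measurable_pi_iff.mpr hmeas
  have hmap : Measure.map T μ = Measure.pi fun _ : Fin (K+1) => ν := by
    refine (Measure.pi_eq fun s hs => ?_).symm
    rw [Measure.map_apply hTmeas (MeasurableSet.univ_pi hs)]
    have hpre : T ⁻¹' Set.pi Set.univ s = ⋂ i, R i ⁻¹' s i := by
      ext ω; simp [hT, Set.mem_pi]
    rw [hpre, hindep.meas_iInter fun i => ⟨s i, hs i, rfl⟩]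
    refine Finset.prod_congr rfl fun i _ => ?_
    rw [← hiid i, Measure.map_apply (hmeas i) (hs i)]
  set B : Fin (K+1) → Set (Fin (K+1) → ℝ) := fun j =>
    {x | (Finset.univ.filter fun i => x i < x j).card < m} with hBdef
  have hBmeas : ∀ j, MeasurableSet (B j) := by
    intro j
    have hc : Measurable fun x : Fin (K+1) → ℝ =>
        (Finset.univ.filter fun i => x i < x j).card := by
      simp only [Finset.card_filter]
      exact Finset.measurable_sum _ fun i _ =>
        Measurable.ite (measurableSet_lt (measurable_pi_apply i) (measurable_pi_apply j))
          measurable_const measurable_const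
    exact hc (show MeasurableSet (Set.Iio m) from trivial)
  have hperm : ∀ j, Measure.pi (fun _ : Fin (K+1) => ν) (B j) =
      Measure.pi (fun _ : Fin (K+1) => ν) (B 0) := by
    intro j
    set e := Equiv.swap (0 : Fin (K+1)) j with he
    have hmp := measurePreserving_piCongrLeft (fun _ : Fin (K+1) => ν) e
    have hpre := hmp.measure_preimage (hBmeas j).nullMeasurableSet
    have happ : ∀ (x : Fin (K+1) → ℝ) (i : Fin (K+1)),
        (MeasurableEquiv.piCongrLeft (fun _ => ℝ) e) x i = x (e.symm i) := by
      intro x i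
      rw [MeasurableEquiv.coe_piCongrLeft]
      conv_lhs => rw [← Equiv.apply_symm_apply e i]
      exact Equiv.piCongrLeft_apply_apply (P := fun _ => ℝ) e x (e.symm i)
    have hset : (MeasurableEquiv.piCongrLeft (fun _ => ℝ) e) ⁻¹' B j = B 0 := by
      ext x
      simp only [Set.mem_preimage, hBdef, Set.mem_setOf_eq, happ]
      have hj : e.symm j = 0 := by simp [he]
      rw [hj]
      have hcard : (Finset.univ.filter fun i => x (e.symm i) < x 0).card =
          (Finset.univ.filter fun i => x i < x 0).card := by
        refine Finset.card_bij' (fun i _ => e.symm i) (fun i _ => e i) ?_ ?_ ?_ ?_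
        · intro a ha
          simp only [Finset.mem_filter, Finset.mem_univ, true_and] at ha ⊢
          exact ha
        · intro a ha
          simp only [Finset.mem_filter, Finset.mem_univ, true_and] at ha ⊢
          simpa using ha
        · intro a _; simp
        · intro a _; simp
      rw [hcard]
    rw [hset] at hpre
    exact hpre.symm
  have hmA : ∀ j, MeasurableSet (T ⁻¹' B j) := fun j => hTmeas (hBmeas j)
  have hmn : m ≤ K + 1 := by
    rw [hmdef, Nat.ceil_le]
    push_cast
    nlinarith
  have hsum : (m : ℝ≥0∞) ≤ ∑ j : Fin (K+1), μ (T ⁻¹' B j) := by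
    have hle : ∀ ω, (m:ℝ≥0∞) ≤
        ∑ j : Fin (K+1), (T ⁻¹' B j).indicator (fun _ => (1:ℝ≥0∞)) ω := by
      intro ω
      have hA := rank_count_lemma hmn (fun i => R i ω)
      have heq : ∑ j : Fin (K+1), (T ⁻¹' B j).indicator (fun _ => (1:ℝ≥0∞)) ω
          = ((Finset.univ.filter fun j : Fin (K+1) =>
              (Finset.univ.filter fun i => R i ω < R j ω).card < m).card : ℝ≥0∞) := by
        rw [Finset.card_filter]
        push_cast
        refine Finset.sum_congr rfl fun j _ => ?_
        simp [Set.indicator_apply, hT, hBdef]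
      rw [heq]
      exact_mod_cast hA
    calc (m:ℝ≥0∞) = ∫⁻ _, (m:ℝ≥0∞) ∂μ := by simp
    _ ≤ ∫⁻ ω, ∑ j : Fin (K+1), (T ⁻¹' B j).indicator (fun _ => (1:ℝ≥0∞)) ω ∂μ :=
        lintegral_mono hle
    _ = ∑ j : Fin (K+1), ∫⁻ ω, (T ⁻¹' B j).indicator (fun _ => (1:ℝ≥0∞)) ω ∂μ :=
        lintegral_finset_sum _ fun j _ => measurable_one.indicator (hmA j)
    _ = ∑ j : Fin (K+1), μ (T ⁻¹' B j) := by
        refine Finset.sum_congr rfl fun j _ => ?_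
        exact lintegral_indicator_one (hmA j)
  have hμA : ∀ j, μ (T ⁻¹' B j) = μ (T ⁻¹' B 0) := fun j => by
    rw [← Measure.map_apply hTmeas (hBmeas j), ← Measure.map_apply hTmeas (hBmeas 0),
      hmap, hperm j]
  have hKm : (m : ℝ≥0∞) ≤ ((K+1:ℕ) : ℝ≥0∞) * μ (T ⁻¹' B 0) := by
    refine le_trans hsum ?_
    rw [Finset.sum_congr rfl fun j _ => hμA j, Finset.sum_const, Finset.card_univ,
      Fintype.card_fin, nsmul_eq_mul]
  have h1 : ENNReal.ofReal (1 - δ) * ((K+1:ℕ) : ℝ≥0∞) ≤ (m : ℝ≥0∞) := by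
    rw [← ENNReal.ofReal_natCast (K+1), ← ENNReal.ofReal_mul (by linarith),
      ← ENNReal.ofReal_natCast m]
    refine ENNReal.ofReal_le_ofReal ?_
    have hceil := Nat.le_ceil ((1 - δ) * ((K:ℝ) + 1))
    rw [hmdef]
    push_cast
    push_cast at hceil
    linarith
  have hne : ((K+1:ℕ) : ℝ≥0∞) ≠ 0 := by simp
  have hnt : ((K+1:ℕ) : ℝ≥0∞) ≠ ⊤ := by simp
  have hfinal : ENNReal.ofReal (1 - δ) ≤ μ (T ⁻¹' B 0) := by
    have h2 : ((K+1:ℕ):ℝ≥0∞) * ENNReal.ofReal (1-δ) ≤ ((K+1:ℕ):ℝ≥0∞) * μ (T ⁻¹' B 0) := by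
      rw [mul_comm]
      exact le_trans h1 hKm
    exact (ENNReal.mul_le_mul_iff_right hne hnt).mp h2
  refine le_trans hfinal (measure_mono fun ω hω => ?_)
  exact le_quantile_of_count_lt hK (fun i => R i ω) (by simpa [hBdef, hT, hmdef] using hω)
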